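/- arXiv:0903.3027 — 2 statements merged into one kernel-verified Lean document; each statement's English description precedes it below -/
import Mathlib

section
/- Let L ≥ log 3 and B ≥ 2 log 3 be real numbers, and let (Y_k)_{k≥0} be a sequence of nonnegative reals with Y_0 = 0 and satisfying Y_k ≤ B·k + k²·L + k·log(Y_{k-1}) for all k ≥ 1 (with the convention log of a number ≤ 1 contributes ≤ 0, i.e. Y_k ≤ B·k + k²·L + k·max(log Y_{k-1}, 0)). Then Y_k ≤ 8·(B·k + k²·L) for all k ≥ 0. -/
theorem recursion_bound (L B : ℝ) (hL : Real.log 3 ≤ L) (hB : 2 * Real.log 3 ≤ B)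
    (Y : ℕ → ℝ) (hYnonneg : ∀ k, 0 ≤ Y k) (hY0 : Y 0 = 0)
    (hY : ∀ k : ℕ, 1 ≤ k → Y k ≤ B * k + (k : ℝ) ^ 2 * L + k * max (Real.log (Y (k - 1))) 0) :
    ∀ k : ℕ, Y k ≤ 8 * (B * k + (k : ℝ) ^ 2 * L) := by
  have h3 : (1:ℝ) ≤ Real.log 3 := by
    rw [Real.le_log_iff_exp_le (by norm_num)]
    exact le_trans (le_of_lt Real.exp_one_lt_d9) (by norm_num)
  have hL1 : (1:ℝ) ≤ L := le_trans h3 hL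
  have hB2 : (2:ℝ) ≤ B := le_trans (by linarith) hB
  intro k
  induction k with
  | zero => simp [hY0]
  | succ n ih =>
    have h := hY (n+1) (Nat.le_add_left 1 n)
    simp only [Nat.add_sub_cancel] at h
    set c : ℝ := (n:ℝ) + 1 with hc
    have hn0 : (0:ℝ) ≤ (n:ℝ) := Nat.cast_nonneg n
    have hc1 : (1:ℝ) ≤ c := by rw [hc]; linarith
    have hc0 : (0:ℝ) < c := by linarith
    have hBL : (0:ℝ) < B + c * L := by nlinarith
    have key : c * max (Real.log (Y n)) 0 ≤ 7 * (B * c + c ^ 2 * L) := by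
      rcases le_or_gt (Y n) 1 with hY1 | hY1
      · have hlog : Real.log (Y n) ≤ 0 := Real.log_nonpos (hYnonneg n) hY1
        rw [max_eq_right hlog]
        nlinarith
      · have hYpos : (0:ℝ) < Y n := lt_trans one_pos hY1
        have hMle : Y n ≤ 8 * (c * (B + c * L)) := by
          nlinarith [ih, hc, mul_nonneg hn0 (by linarith : (0:ℝ) ≤ L)]
        have hlog : Real.log (Y n) ≤ Real.log (8 * (c * (B + c * L))) :=
          Real.log_le_log hYpos hMle
        have hsplit : Real.log (8 * (c * (B + c * L)))
            = Real.log 8 + (Real.log c + Real.log (B + c * L)) := by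
          rw [Real.log_mul (by norm_num) (by positivity), Real.log_mul (ne_of_gt hc0) (ne_of_gt hBL)]
        have h8 : Real.log 8 ≤ 7 := by
          have := Real.log_le_sub_one_of_pos (show (0:ℝ) < 8 by norm_num)
          linarith
        have hlc : Real.log c ≤ c - 1 := by
          have := Real.log_le_sub_one_of_pos hc0; linarith
        have hlBL : Real.log (B + c * L) ≤ B + c * L - 1 := by
          have := Real.log_le_sub_one_of_pos hBL; linarith
        have hmax : max (Real.log (Y n)) 0 ≤ 7 + (c - 1) + (B + c * L - 1) := by
          apply max_le
          · rw [hsplit] at hlog; linarith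
          · nlinarith
        calc c * max (Real.log (Y n)) 0 ≤ c * (7 + (c - 1) + (B + c * L - 1)) :=
              mul_le_mul_of_nonneg_left hmax (le_of_lt hc0)
          _ ≤ 7 * (B * c + c ^ 2 * L) := by nlinarith
    have hcast : ((n+1 : ℕ) : ℝ) = c := by push_cast; ring
    rw [hcast] at h ⊢
    linarith
end

section
/- Let (X_k)_{k≥0} be nonnegative reals with X_0 = 0, and suppose there are constants c ≥ 2, A ≥ 2 log 3 and L ≥ log 3 such that X_k ≤ c·(A·k + k²·L + k·max(log X_{k-1}, 0)) for all k ≥ 1. Then for all k ≥ 0, X_k ≤ 8c·((A + log c)·k + k²·L). -/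
theorem scaled_recursion_bound (c A L : ℝ) (hc : 2 ≤ c) (hA : 2 * Real.log 3 ≤ A)
    (hL : Real.log 3 ≤ L) (X : ℕ → ℝ) (hXnonneg : ∀ k, 0 ≤ X k) (hX0 : X 0 = 0)
    (hX : ∀ k : ℕ, 1 ≤ k →
      X k ≤ c * (A * k + (k : ℝ) ^ 2 * L + k * max (Real.log (X (k - 1))) 0)) :
    ∀ k : ℕ, X k ≤ 8 * c * ((A + Real.log c) * k + (k : ℝ) ^ 2 * L) := by
  have hc0 : (0:ℝ) < c := by linarith
  have hlogc : 0 < Real.log c := Real.log_pos (by linarith)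
  have hlog3 : (1:ℝ) ≤ Real.log 3 := by
    rw [Real.le_log_iff_exp_le (by norm_num)]
    calc Real.exp 1 ≤ 2.7182818286 := le_of_lt Real.exp_one_lt_d9
      _ ≤ 3 := by norm_num
  have hL1 : (1:ℝ) ≤ L := le_trans hlog3 hL
  have hA0 : (0:ℝ) < A := by linarith
  set B := A + Real.log c with hBdef
  have hB0 : (0:ℝ) < B := by simp only [hBdef]; linarith
  have hAB : A ≤ B := by simp only [hBdef]; linarith
  have hlogcB : Real.log c ≤ B := by simp only [hBdef]; linarith
  have hlog8 : Real.log 8 ≤ (3/2) * B := by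
    have h8 : Real.log 8 ≤ Real.log 27 := Real.log_le_log (by norm_num) (by norm_num)
    have : (27:ℝ) = 3 ^ 3 := by norm_num
    rw [this, Real.log_pow] at h8
    push_cast at h8
    nlinarith
  intro k
  induction k with
  | zero => simp [hX0]
  | succ n ih =>
    have hn0 : (0:ℝ) ≤ (n:ℝ) := Nat.cast_nonneg n
    have hk1 : (1:ℝ) ≤ (n:ℝ) + 1 := by linarith
    -- the key quantity
    set S : ℝ := B + ((n:ℝ)+1) * L with hSdef
    have hS0 : (0:ℝ) < S := by simp only [hSdef]; nlinarith
    -- X n ≤ M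
    have hM0 : (0:ℝ) < 8 * c * (((n:ℝ)+1) * S) := by positivity
    have hXnM : X n ≤ 8 * c * (((n:ℝ)+1) * S) := by
      calc X n ≤ 8 * c * (B * n + (n:ℝ)^2 * L) := ih
        _ ≤ 8 * c * (((n:ℝ)+1) * S) := by
            have h1 : B * (n:ℝ) + (n:ℝ)^2 * L ≤ ((n:ℝ)+1) * S := by
              simp only [hSdef]; nlinarith
            nlinarith [mul_le_mul_of_nonneg_left h1 (by linarith : (0:ℝ) ≤ 8 * c)]
    -- bound max (log (X n)) 0 ≤ 7 * S
    have hT : max (Real.log (X n)) 0 ≤ 7 * S := by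
      have h7S : (0:ℝ) ≤ 7 * S := by linarith
      rcases le_or_gt (X n) 1 with h1 | h1
      · have := Real.log_nonpos (hXnonneg n) h1
        exact max_le (by linarith) h7S
      · have hlogM : Real.log (8 * c * (((n:ℝ)+1) * S)) ≤ 7 * S := by
          rw [Real.log_mul (by positivity) (by positivity),
              Real.log_mul (by positivity) (by positivity),
              Real.log_mul (by positivity) (by positivity)]
          have l1 : Real.log ((n:ℝ)+1) ≤ (n:ℝ) := by
            have := Real.log_le_sub_one_of_pos (x := (n:ℝ)+1) (by linarith)
            linarith
          have l2 : Real.log S ≤ S := by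
            have := Real.log_le_sub_one_of_pos hS0
            linarith
          have l3 : (n:ℝ) ≤ ((n:ℝ)+1) * L := by nlinarith
          simp only [hSdef] at l2 ⊢
          nlinarith
        have := Real.log_le_log (by linarith) hXnM
        exact max_le (le_trans this hlogM) h7S
    -- apply recursion
    have hrec := hX (n+1) (by omega)
    have hsub : (n + 1 : ℕ) - 1 = n := by omega
    rw [hsub] at hrec
    push_cast at hrec ⊢
    have hmul : ((n:ℝ)+1) * max (Real.log (X n)) 0 ≤ ((n:ℝ)+1) * (7 * S) :=
      mul_le_mul_of_nonneg_left hT (by linarith)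
    calc X (n+1) ≤ c * (A * ((n:ℝ)+1) + ((n:ℝ)+1)^2 * L + ((n:ℝ)+1) * max (Real.log (X n)) 0) := hrec
      _ ≤ c * (A * ((n:ℝ)+1) + ((n:ℝ)+1)^2 * L + ((n:ℝ)+1) * (7 * S)) :=
          mul_le_mul_of_nonneg_left (by linarith) hc0.le
      _ ≤ 8 * c * (B * ((n:ℝ)+1) + ((n:ℝ)+1)^2 * L) := by
          have key : 0 ≤ c * ((n:ℝ)+1) * (B - A) :=
            mul_nonneg (mul_nonneg hc0.le (by linarith)) (by linarith)
          have expand : 8 * c * (B * ((n:ℝ)+1) + ((n:ℝ)+1)^2 * L)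
              - c * (A * ((n:ℝ)+1) + ((n:ℝ)+1)^2 * L + ((n:ℝ)+1) * (7 * (B + ((n:ℝ)+1) * L)))
              = c * ((n:ℝ)+1) * (B - A) := by ring
          simp only [hSdef]
          linarith [key, expand]
end
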